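/- arXiv:1605.05257 — 4 statements merged into one kernel-verified Lean document; each statement's English description precedes it below -/
import Mathlib

section
/- Let n ≥ 1, let ω₁ < ω₂ < ⋯ < ω_n be real numbers and let A₁, …, A_n be nonzero complex numbers. Define the exponential sum g(z) = Σ_{j=1}^n A_j · exp(ω_j · z) for z ∈ ℂ. Then there exists K > 0 such that every zero z of g satisfies |Re z| < K. -/
open Complex

lemma exp_sum_zeros_re_lt
    (n : ℕ) (hn : 1 ≤ n)
    (ω : Fin n → ℝ) (hω : StrictMono ω)
    (A : Fin n → ℂ) (hA : ∀ j, A j ≠ 0) :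
    ∃ K > 0, ∀ z : ℂ, (∑ j : Fin n, A j * Complex.exp ((ω j : ℂ) * z)) = 0 → z.re < K := by
  rcases eq_or_lt_of_le hn with h1 | h2
  · -- n = 1
    refine ⟨1, one_pos, fun z hz => ?_⟩
    exfalso
    subst h1
    simp only [Fin.sum_univ_one] at hz
    exact (mul_ne_zero (hA 0) (Complex.exp_ne_zero _)) hz
  · -- n ≥ 2
    set m : Fin n := ⟨n - 1, by omega⟩ with hm
    set m' : Fin n := ⟨n - 2, by omega⟩ with hm'
    have hmm' : ω m' < ω m := hω (by simp [hm, hm', Fin.lt_def]; omega)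
    set c : ℝ := ω m - ω m' with hc
    have hcpos : 0 < c := sub_pos.mpr hmm'
    set S : ℝ := ∑ j ∈ Finset.univ.erase m, ‖A j‖ with hS
    have hSpos : 0 < S := by
      apply Finset.sum_pos (fun j _ => norm_pos_iff.mpr (hA j))
      refine ⟨⟨0, by omega⟩, Finset.mem_erase.mpr ⟨?_, Finset.mem_univ _⟩⟩
      simp [hm, Fin.ext_iff]; omega
    have hAm : 0 < ‖A m‖ := norm_pos_iff.mpr (hA m)
    refine ⟨max 1 (Real.log (S / ‖A m‖) / c + 1), lt_of_lt_of_le one_pos (le_max_left _ _),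
      fun z hz => ?_⟩
    by_contra hcon
    push_neg at hcon
    set x := z.re with hx
    have hx0 : (1 : ℝ) ≤ x := le_trans (le_max_left _ _) hcon
    have hxlog : Real.log (S / ‖A m‖) / c + 1 ≤ x := le_trans (le_max_right _ _) hcon
    -- isolate the top term
    have hsplit : A m * Complex.exp ((ω m : ℂ) * z)
        = -∑ j ∈ Finset.univ.erase m, A j * Complex.exp ((ω j : ℂ) * z) := by
      have := Finset.add_sum_erase Finset.univ
        (fun j => A j * Complex.exp ((ω j : ℂ) * z)) (Finset.mem_univ m)
      rw [hz] at this
      linear_combination this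
    have hnorm : ‖A m‖ * Real.exp (ω m * x)
        ≤ S * Real.exp (ω m' * x) := by
      have h1 : ‖A m * Complex.exp ((ω m : ℂ) * z)‖ = ‖A m‖ * Real.exp (ω m * x) := by
        rw [norm_mul, Complex.norm_exp]
        simp [hx]
      calc ‖A m‖ * Real.exp (ω m * x)
          = ‖-∑ j ∈ Finset.univ.erase m, A j * Complex.exp ((ω j : ℂ) * z)‖ := by
            rw [← h1, hsplit]
        _ ≤ ∑ j ∈ Finset.univ.erase m, ‖A j * Complex.exp ((ω j : ℂ) * z)‖ := by
            rw [norm_neg]; exact norm_sum_le _ _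
        _ ≤ ∑ j ∈ Finset.univ.erase m, ‖A j‖ * Real.exp (ω m' * x) := by
            apply Finset.sum_le_sum
            intro j hj
            rw [norm_mul, Complex.norm_exp]
            simp only [hx]
            have hre : ((ω j : ℂ) * z).re = ω j * z.re := by simp
            rw [hre]
            apply mul_le_mul_of_nonneg_left _ (norm_nonneg _)
            apply Real.exp_le_exp.mpr
            apply mul_le_mul_of_nonneg_right _ (by linarith)
            -- ω j ≤ ω m'
            have hjm : j ≠ m := (Finset.mem_erase.mp hj).1
            have hjlt : (j : ℕ) < n - 1 := by
              have := j.isLt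
              rcases lt_or_eq_of_le (Nat.le_of_lt_succ (by omega : (j:ℕ) < n - 1 + 1)) with h | h
              · exact h
              · exact absurd (Fin.ext h) hjm
            exact hω.monotone (by simp [hm', Fin.le_def]; omega)
        _ = S * Real.exp (ω m' * x) := by rw [hS, Finset.sum_mul]
    -- derive contradiction
    have hdiv : Real.exp (c * x) ≤ S / ‖A m‖ := by
      rw [le_div_iff₀ hAm] at *
      have hexp : Real.exp (ω m * x) = Real.exp (c * x) * Real.exp (ω m' * x) := by
        rw [← Real.exp_add, hc]; ring_nf
      rw [hexp, ← mul_assoc] at hnorm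
      nlinarith [Real.exp_pos (ω m' * x), Real.exp_pos (c * x)]
    have hlog : c * x ≤ Real.log (S / ‖A m‖) := by
      have := Real.log_le_log (Real.exp_pos _) hdiv
      rwa [Real.log_exp] at this
    have : x ≤ Real.log (S / ‖A m‖) / c := (le_div_iff₀' hcpos).mpr hlog
    linarith

/-- Part (1) of Dickson's zero-counting theorem for exponential sums:
all zeros of an exponential sum `g z = ∑ j, A j * exp (ω j * z)` with nonzero
coefficients and strictly increasing real exponents lie in a vertical strip
`|Re z| < K`. -/
theorem exp_sum_zeros_in_strip
    (n : ℕ) (hn : 1 ≤ n)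
    (ω : Fin n → ℝ) (hω : StrictMono ω)
    (A : Fin n → ℂ) (hA : ∀ j, A j ≠ 0)
    (g : ℂ → ℂ)
    (hg : ∀ z : ℂ, g z = ∑ j : Fin n, A j * Complex.exp ((ω j : ℂ) * z)) :
    ∃ K > 0, ∀ z : ℂ, g z = 0 → |z.re| < K := by
  obtain ⟨K1, hK1, h1⟩ := exp_sum_zeros_re_lt n hn ω hω A hA
  have hmono : StrictMono (fun j : Fin n => -ω j.rev) := by
    intro i j hij
    simp only [neg_lt_neg_iff]
    exact hω (Fin.rev_lt_rev.mpr hij)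
  obtain ⟨K2, hK2, h2⟩ := exp_sum_zeros_re_lt n hn _ hmono (fun j => A j.rev) (fun j => hA _)
  refine ⟨max K1 K2, lt_of_lt_of_le hK1 (le_max_left _ _), fun z hz => ?_⟩
  rw [hg] at hz
  rw [abs_lt]
  constructor
  · have : (-z).re < K2 := by
      apply h2
      rw [← hz]
      apply Fintype.sum_bijective Fin.rev Fin.rev_bijective
      intro j
      congr 1
      push_cast
      ring_nf
    simp only [Complex.neg_re] at this
    have : -K2 < z.re := by linarith
    exact lt_of_le_of_lt (by simp [neg_le_neg_iff]) this
  · exact lt_of_lt_of_le (h1 z hz) (le_max_left _ _)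
end

section
/- Let n ≥ 2, let ω₁ < ω₂ < ⋯ < ω_n be real numbers and let A₁, …, A_n be nonzero complex numbers, and define g(z) = Σ_{j=1}^n A_j · exp(ω_j · z). Then g has infinitely many zeros; i.e., the set {z ∈ ℂ : g(z) = 0} is infinite. -/
open Complex Finset Metric Filter Bornology Topology

lemma expsum_dominant_right {n : ℕ} (ω : Fin n → ℝ) (B : Fin n → ℂ) (k : Fin n)
    (hBk : B k ≠ 0) (hdom : ∀ j, j ≠ k → B j = 0 ∨ ω j < ω k) :
    ∃ X : ℝ, ∀ z : ℂ, X ≤ z.re →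
      ‖B k‖ * Real.exp (ω k * z.re) ≤ 2 * ‖∑ j, B j * Complex.exp ((ω j : ℂ) * z)‖ := by
  set φ : ℝ → ℝ := fun X => ∑ j ∈ univ.erase k, ‖B j‖ * Real.exp ((ω j - ω k) * X) with hφdef
  have hφ0 : Tendsto φ atTop (𝓝 0) := by
    have h : Tendsto (fun X : ℝ => ∑ j ∈ univ.erase k, ‖B j‖ * Real.exp ((ω j - ω k) * X))
        atTop (𝓝 (∑ _j ∈ univ.erase k, (0:ℝ))) := by
      refine tendsto_finset_sum _ fun j hj => ?_
      rcases hdom j (Finset.ne_of_mem_erase hj) with h0 | hlt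
      · simpa [h0] using (tendsto_const_nhds : Tendsto (fun _ : ℝ => (0:ℝ)) atTop _)
      · have h1 : Tendsto (fun X : ℝ => (ω j - ω k) * X) atTop atBot := by
          apply Tendsto.const_mul_atTop_of_neg (by linarith) tendsto_id
        have h2 := Real.tendsto_exp_atBot.comp h1
        simpa using h2.const_mul ‖B j‖
    rw [Finset.sum_const_zero] at h
    exact h
  have hev : ∀ᶠ X in atTop, φ X ≤ ‖B k‖ / 2 := by
    have hpos : (0:ℝ) < ‖B k‖ / 2 := by
      have := norm_pos_iff.2 hBk; linarith
    exact hφ0.eventually_le_const hpos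
  obtain ⟨X₀, hX₀⟩ := eventually_atTop.1 hev
  refine ⟨X₀, fun z hz => ?_⟩
  have hnorm : ∀ j, ‖B j * Complex.exp ((ω j : ℂ) * z)‖ = ‖B j‖ * Real.exp (ω j * z.re) := by
    intro j
    rw [norm_mul, Complex.norm_exp]
    congr 2
    simp [Complex.mul_re]
  have hsplit : B k * Complex.exp ((ω k : ℂ) * z)
      = (∑ j, B j * Complex.exp ((ω j : ℂ) * z))
        - ∑ j ∈ univ.erase k, B j * Complex.exp ((ω j : ℂ) * z) := by
    rw [← Finset.sum_erase_add univ _ (mem_univ k)]; ring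
  have h1 : ‖B k‖ * Real.exp (ω k * z.re)
      ≤ ‖∑ j, B j * Complex.exp ((ω j : ℂ) * z)‖
        + ‖∑ j ∈ univ.erase k, B j * Complex.exp ((ω j : ℂ) * z)‖ := by
    rw [← hnorm k, hsplit]; exact norm_sub_le _ _
  have h2 : ‖∑ j ∈ univ.erase k, B j * Complex.exp ((ω j : ℂ) * z)‖
      ≤ φ z.re * Real.exp (ω k * z.re) := by
    calc ‖∑ j ∈ univ.erase k, B j * Complex.exp ((ω j : ℂ) * z)‖
        ≤ ∑ j ∈ univ.erase k, ‖B j * Complex.exp ((ω j : ℂ) * z)‖ := norm_sum_le _ _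
      _ = ∑ j ∈ univ.erase k, ‖B j‖ * Real.exp ((ω j - ω k) * z.re) * Real.exp (ω k * z.re) := by
          refine Finset.sum_congr rfl fun j _ => ?_
          rw [hnorm j, mul_assoc, ← Real.exp_add]
          ring_nf
      _ = φ z.re * Real.exp (ω k * z.re) := by rw [hφdef, ← Finset.sum_mul]
  have h3 : φ z.re ≤ ‖B k‖ / 2 := hX₀ z.re hz
  have hexp : 0 < Real.exp (ω k * z.re) := Real.exp_pos _
  nlinarith [norm_nonneg (∑ j, B j * Complex.exp ((ω j : ℂ) * z))]

lemma expsum_dominant_left {n : ℕ} (ω : Fin n → ℝ) (B : Fin n → ℂ) (k : Fin n)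
    (hBk : B k ≠ 0) (hdom : ∀ j, j ≠ k → B j = 0 ∨ ω k < ω j) :
    ∃ X : ℝ, ∀ z : ℂ, z.re ≤ X →
      ‖B k‖ * Real.exp (ω k * z.re) ≤ 2 * ‖∑ j, B j * Complex.exp ((ω j : ℂ) * z)‖ := by
  obtain ⟨X, hX⟩ := expsum_dominant_right (fun j => -ω j) B k hBk
    (fun j hj => (hdom j hj).imp id fun h => by simpa using h)
  refine ⟨-X, fun z hz => ?_⟩
  have h := hX (-z) (by rw [Complex.neg_re]; linarith)
  have hsum : (∑ j, B j * Complex.exp (((-ω j : ℝ) : ℂ) * (-z)))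
      = ∑ j, B j * Complex.exp ((ω j : ℂ) * z) := by
    refine Finset.sum_congr rfl fun j _ => ?_
    congr 1
    push_cast
    ring_nf
  rw [hsum, Complex.neg_re] at h
  simpa using h

lemma expsum_eq_zero {n : ℕ} (ω : Fin n → ℝ) (hω : Function.Injective ω) (B : Fin n → ℂ)
    (h : ∀ z : ℂ, ∑ j, B j * Complex.exp ((ω j : ℂ) * z) = 0) : ∀ j, B j = 0 := by
  by_contra hc
  push_neg at hc
  obtain ⟨j₀, hj₀⟩ := hc
  have hT : (univ.filter fun j => B j ≠ 0).Nonempty := ⟨j₀, by simp [hj₀]⟩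
  obtain ⟨k, hk, hkmax⟩ := Finset.exists_max_image _ ω hT
  have hBk : B k ≠ 0 := (Finset.mem_filter.1 hk).2
  obtain ⟨X, hX⟩ := expsum_dominant_right ω B k hBk (fun j hj => by
    by_cases hBj : B j = 0
    · exact Or.inl hBj
    · exact Or.inr (lt_of_le_of_ne (hkmax j (by simp [hBj])) fun he => hj (hω he)))
  have h1 := hX ((X : ℝ) : ℂ) (by simp)
  rw [h] at h1
  simp only [norm_zero, mul_zero] at h1
  have : 0 < ‖B k‖ * Real.exp (ω k * ((X : ℝ) : ℂ).re) := by
    have := norm_pos_iff.2 hBk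
    positivity
  linarith

lemma expsum_differentiable {n : ℕ} (ω : Fin n → ℝ) (B : Fin n → ℂ) :
    Differentiable ℂ fun z => ∑ j, B j * Complex.exp ((ω j : ℂ) * z) :=
  Differentiable.fun_sum fun j _ => ((differentiable_id.const_mul _).cexp).const_mul _

lemma expsum_hasDerivAt {n : ℕ} (ω : Fin n → ℝ) (B : Fin n → ℂ) (z : ℂ) :
    HasDerivAt (fun z => ∑ j, B j * Complex.exp ((ω j : ℂ) * z))
      (∑ j, (B j * (ω j : ℂ)) * Complex.exp ((ω j : ℂ) * z)) z := by
  refine HasDerivAt.fun_sum fun j _ => ?_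
  have h1 : HasDerivAt (fun z : ℂ => (ω j : ℂ) * z) ((ω j : ℂ)) z := by
    simpa using (hasDerivAt_id z).const_mul ((ω j : ℂ))
  have h3 := h1.cexp.const_mul (B j)
  have h4 : (B j * (ω j : ℂ)) * Complex.exp ((ω j : ℂ) * z) = B j * (Complex.exp ((ω j : ℂ) * z) * (ω j : ℂ)) := by ring
  rw [h4]
  exact h3

lemma exists_zero_in_closedBall {f : ℂ → ℂ} (hf : Differentiable ℂ f) {c : ℂ} {r : ℝ}
    (hr : 0 < r) (hlt : ∀ z ∈ sphere c r, ‖f c‖ < ‖f z‖) :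
    ∃ w ∈ closedBall c r, f w = 0 := by
  by_contra hcon
  push_neg at hcon
  obtain ⟨w₀, hw₀, hmin⟩ := (isCompact_sphere c r).exists_isMinOn
    (NormedSpace.sphere_nonempty.2 hr.le) (continuous_norm.comp hf.continuous).continuousOn
  have hfw₀ : f w₀ ≠ 0 := hcon w₀ (sphere_subset_closedBall hw₀)
  have hfc : f c ≠ 0 := hcon c (mem_closedBall_self hr.le)
  have hkey : ‖(f c)⁻¹‖ ≤ ‖f w₀‖⁻¹ := by
    refine Complex.norm_le_of_forall_mem_frontier_norm_le isBounded_ball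
      ⟨(hf.differentiableOn).inv fun z hz => hcon z (ball_subset_closedBall hz), ?_⟩
      (fun z hz => ?_) ?_
    · rw [closure_ball c hr.ne']
      exact (hf.continuous.continuousOn).inv₀ fun z hz => hcon z hz
    · rw [frontier_ball c hr.ne'] at hz
      rw [Pi.inv_apply, norm_inv]
      exact inv_anti₀ (norm_pos_iff.2 hfw₀) (hmin hz)
    · rw [closure_ball c hr.ne']
      exact mem_closedBall_self hr.le
  rw [norm_inv] at hkey
  have h1 : ‖f w₀‖ ≤ ‖f c‖ := by
    have hc0 : 0 < ‖f c‖ := norm_pos_iff.2 hfc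
    have hw0 : 0 < ‖f w₀‖ := norm_pos_iff.2 hfw₀
    rwa [inv_le_inv₀ hc0 hw0] at hkey
  exact absurd (hlt w₀ hw₀) (not_lt.2 h1)

lemma exists_good_radius {f : ℂ → ℂ} (hf : Differentiable ℂ f) (c : ℂ)
    (hfne : ¬ ∀ z, f z = 0) :
    ∃ r m : ℝ, 0 < r ∧ r ≤ 1 ∧ 0 < m ∧ ∀ z ∈ sphere c r, m ≤ ‖f z‖ := by
  rcases (hf.analyticAt c).eventually_eq_zero_or_eventually_ne_zero with h | h
  · exfalso
    apply hfne
    intro z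
    have heq : Set.EqOn f 0 Set.univ :=
      AnalyticOnNhd.eqOn_zero_of_preconnected_of_eventuallyEq_zero
        (fun w _ => hf.analyticAt w) isPreconnected_univ (Set.mem_univ c) h
    exact heq (Set.mem_univ z)
  · rw [eventually_nhdsWithin_iff, Metric.eventually_nhds_iff] at h
    obtain ⟨ε, hε, hball⟩ := h
    set r := min (ε / 2) 1 with hrdef
    have hr : 0 < r := lt_min (by linarith) one_pos
    have hne : ∀ z ∈ sphere c r, f z ≠ 0 := by
      intro z hz
      rw [mem_sphere] at hz
      refine hball (by rw [hz]; exact lt_of_le_of_lt (min_le_left _ _) (by linarith)) ?_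
      simp only [Set.mem_compl_iff, Set.mem_singleton_iff]
      intro he
      rw [he, dist_self] at hz
      exact hr.ne hz
    obtain ⟨w₀, hw₀, hmin⟩ := (isCompact_sphere c r).exists_isMinOn
      (NormedSpace.sphere_nonempty.2 hr.le) (continuous_norm.comp hf.continuous).continuousOn
    exact ⟨r, ‖f w₀‖, hr, min_le_right _ _, norm_pos_iff.2 (hne w₀ hw₀), fun z hz => hmin hz⟩

lemma exists_zero_of_close {G f : ℂ → ℂ} (hf : Differentiable ℂ f) {c : ℂ} {r m : ℝ}
    (hr : 0 < r) (hm : 0 < m) (hGc : G c = 0)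
    (hsphere : ∀ z ∈ sphere c r, m ≤ ‖G z‖)
    (hclose : ∀ z ∈ closedBall c r, ‖f z - G z‖ ≤ m / 3) :
    ∃ w ∈ closedBall c r, f w = 0 := by
  refine exists_zero_in_closedBall hf hr fun z hz => ?_
  have h1 : ‖f c‖ ≤ m / 3 := by
    have := hclose c (mem_closedBall_self hr.le)
    rwa [hGc, sub_zero] at this
  have h2 := hclose z (sphere_subset_closedBall hz)
  have h3 := hsphere z hz
  have h4 := abs_norm_sub_norm_le (f z) (G z)
  rw [abs_le] at h4
  linarith [h4.1]

lemma exists_almost_period {n : ℕ} (ω : Fin n → ℝ) {ε : ℝ} (hε : 0 < ε) (Y : ℝ) :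
    ∃ y : ℝ, Y ≤ y ∧ ∀ j, ‖Complex.exp ((ω j : ℂ) * (y : ℂ) * Complex.I) - 1‖ ≤ ε := by
  set Y' : ℝ := max Y 1 with hY'def
  have hY'1 : 1 ≤ Y' := le_max_right _ _
  have hY'Y : Y ≤ Y' := le_max_left _ _
  set u : ℕ → Fin n → ℂ := fun k j =>
    Complex.exp (((ω j * ((k : ℝ) * Y') : ℝ) : ℂ) * Complex.I) with hudef
  have humem : ∀ k, u k ∈ closedBall (0 : Fin n → ℂ) 1 := by
    intro k
    rw [mem_closedBall_zero_iff]
    refine (pi_norm_le_iff_of_nonneg zero_le_one).2 fun j => ?_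
    rw [hudef]
    simp only [Complex.norm_exp_ofReal_mul_I, le_refl]
  obtain ⟨L, -, φ, hφmono, hφtend⟩ :=
    (isCompact_closedBall (0 : Fin n → ℂ) 1).tendsto_subseq humem
  rw [Metric.tendsto_atTop] at hφtend
  obtain ⟨N, hN⟩ := hφtend (ε / 2) (by linarith)
  set a := φ N with hadef
  set b := φ (N + 1) with hbdef
  have hab : a < b := hφmono (Nat.lt_succ_self N)
  have hdist : dist (u b) (u a) ≤ ε := by
    have h1 := hN N le_rfl
    have h2 := hN (N + 1) (Nat.le_succ N)
    calc dist (u b) (u a) ≤ dist (u b) L + dist L (u a) := dist_triangle _ _ _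
      _ = dist (u b) L + dist (u a) L := by rw [dist_comm L]
      _ ≤ ε := by simp only [Function.comp_apply] at h1 h2; rw [← hadef] at h1; rw [← hbdef] at h2; linarith
  refine ⟨(b : ℝ) * Y' - (a : ℝ) * Y', ?_, ?_⟩
  · have hba : (1 : ℝ) ≤ (b : ℝ) - (a : ℝ) := by
      have : a + 1 ≤ b := hab
      have := (Nat.cast_le (α := ℝ)).2 this
      push_cast at this
      linarith
    nlinarith
  · intro j
    have h1 : dist (u b j) (u a j) ≤ ε := le_trans (dist_le_pi_dist (u b) (u a) j) hdist
    have hmul : Complex.exp ((ω j : ℂ) * (((b : ℝ) * Y' - (a : ℝ) * Y' : ℝ) : ℂ) * Complex.I)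
        * Complex.exp (((ω j * ((a : ℝ) * Y') : ℝ) : ℂ) * Complex.I)
        = Complex.exp (((ω j * ((b : ℝ) * Y') : ℝ) : ℂ) * Complex.I) := by
      rw [← Complex.exp_add]
      congr 1
      push_cast
      ring
    have hnorm1 : ‖Complex.exp (((ω j * ((a : ℝ) * Y') : ℝ) : ℂ) * Complex.I)‖ = 1 := by
      rw [Complex.norm_exp_ofReal_mul_I]
    calc ‖Complex.exp ((ω j : ℂ) * (((b : ℝ) * Y' - (a : ℝ) * Y' : ℝ) : ℂ) * Complex.I) - 1‖
        = ‖Complex.exp ((ω j : ℂ) * (((b : ℝ) * Y' - (a : ℝ) * Y' : ℝ) : ℂ) * Complex.I) - 1‖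
          * ‖Complex.exp (((ω j * ((a : ℝ) * Y') : ℝ) : ℂ) * Complex.I)‖ := by
          rw [hnorm1, mul_one]
      _ = ‖Complex.exp (((ω j * ((b : ℝ) * Y') : ℝ) : ℂ) * Complex.I)
          - Complex.exp (((ω j * ((a : ℝ) * Y') : ℝ) : ℂ) * Complex.I)‖ := by
          rw [← norm_mul, sub_mul, one_mul, hmul]
      _ = dist (u b j) (u a j) := by rw [dist_eq_norm, hudef]
      _ ≤ ε := h1

lemma expsum_small_values {n : ℕ} (hn : 2 ≤ n) (ω : Fin n → ℝ) (hω : StrictMono ω)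
    (A : Fin n → ℂ) (hA : ∀ j, A j ≠ 0) :
    ∃ M : ℝ, 0 < M ∧ ∀ m : ℝ, 0 < m →
      ∃ z : ℂ, |z.re| ≤ M ∧ ‖∑ j, A j * Complex.exp ((ω j : ℂ) * z)‖ < m := by
  have hn0 : 0 < n := by omega
  set i0 : Fin n := ⟨0, by omega⟩ with hi0def
  set il : Fin n := ⟨n - 1, by omega⟩ with hildef
  have hi0v : i0.val = 0 := rfl
  have hilv : il.val = n - 1 := rfl
  have h0l : i0 < il := by
    rw [Fin.lt_def, hi0v, hilv]
    omega
  have hlej : ∀ j : Fin n, ω i0 ≤ ω j ∧ ω j ≤ ω il := by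
    intro j
    constructor
    · exact hω.monotone (by rw [Fin.le_def, hi0v]; omega)
    · exact hω.monotone (by rw [Fin.le_def, hilv]; have := j.isLt; omega)
  obtain ⟨Xp, hXp⟩ := expsum_dominant_right ω A il (hA il) (fun j hj => Or.inr (hω (by
    rw [Fin.lt_def, hilv]
    have h1 := j.isLt
    have h2 : j.val ≠ n - 1 := fun h => hj (Fin.ext (h.trans hilv.symm))
    omega)))
  obtain ⟨Xm, hXm⟩ := expsum_dominant_left ω A i0 (hA i0) (fun j hj => Or.inr (hω (by
    rw [Fin.lt_def, hi0v]
    have h2 : j.val ≠ 0 := fun h => hj (Fin.ext (h.trans hi0v.symm))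
    omega)))
  set M : ℝ := max (max Xp (-Xm)) 1 with hMdef
  have hM1 : 1 ≤ M := le_max_right _ _
  have hMXp : Xp ≤ M := le_trans (le_max_left _ _) (le_max_left _ _)
  have hMXm : -M ≤ Xm := by
    have : -Xm ≤ M := le_trans (le_max_right _ _) (le_max_left _ _)
    linarith
  refine ⟨M, by linarith, fun m hm => ?_⟩
  by_contra hcon
  push_neg at hcon
  set S : ℂ → ℂ := fun z => ∑ j, A j * Complex.exp ((ω j : ℂ) * z) with hSdef
  set EM : ℝ := Real.exp ((|ω il| + |ω i0|) * M) with hEMdef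
  have hEM1 : 1 ≤ EM := Real.one_le_exp (by positivity)
  set clow : ℝ := min (min (‖A il‖ / 4) (‖A i0‖ / 4)) (m / (2 * EM)) with hclowdef
  have hAil : 0 < ‖A il‖ := norm_pos_iff.2 (hA il)
  have hAi0 : 0 < ‖A i0‖ := norm_pos_iff.2 (hA i0)
  have hclow : 0 < clow := by
    refine lt_min (lt_min (by linarith) (by linarith)) (by positivity)
  have hlow : ∀ z : ℂ, clow * (Real.exp (ω il * z.re) + Real.exp (ω i0 * z.re)) ≤ ‖S z‖ := by
    intro z
    have hEl : 0 < Real.exp (ω il * z.re) := Real.exp_pos _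
    have hE0 : 0 < Real.exp (ω i0 * z.re) := Real.exp_pos _
    rcases le_or_gt M z.re with hcase | hcase
    · -- right region
      have h1 := hXp z (by linarith)
      have h2 : Real.exp (ω i0 * z.re) ≤ Real.exp (ω il * z.re) :=
        Real.exp_le_exp.2 (mul_le_mul_of_nonneg_right (hlej i0).2 (by linarith))
      have h3 : clow ≤ ‖A il‖ / 4 := le_trans (min_le_left _ _) (min_le_left _ _)
      nlinarith
    rcases le_or_gt z.re (-M) with hcase2 | hcase2
    · -- left region
      have h1 := hXm z (by linarith)
      have h2 : Real.exp (ω il * z.re) ≤ Real.exp (ω i0 * z.re) :=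
        Real.exp_le_exp.2 (by nlinarith [(hlej il).1])
      have h3 : clow ≤ ‖A i0‖ / 4 := le_trans (min_le_left _ _) (min_le_right _ _)
      nlinarith
    · -- strip
      have h1 : m ≤ ‖S z‖ := hcon z (by rw [abs_le]; constructor <;> linarith)
      have habs : |z.re| ≤ M := by rw [abs_le]; constructor <;> linarith
      have h2 : Real.exp (ω il * z.re) ≤ EM := by
        rw [hEMdef]
        apply Real.exp_le_exp.2
        calc ω il * z.re ≤ |ω il * z.re| := le_abs_self _
          _ = |ω il| * |z.re| := abs_mul _ _
          _ ≤ |ω il| * M := by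
              apply mul_le_mul_of_nonneg_left habs (abs_nonneg _)
          _ ≤ (|ω il| + |ω i0|) * M := by nlinarith [abs_nonneg (ω i0)]
      have h3 : Real.exp (ω i0 * z.re) ≤ EM := by
        rw [hEMdef]
        apply Real.exp_le_exp.2
        calc ω i0 * z.re ≤ |ω i0 * z.re| := le_abs_self _
          _ = |ω i0| * |z.re| := abs_mul _ _
          _ ≤ |ω i0| * M := by
              apply mul_le_mul_of_nonneg_left habs (abs_nonneg _)
          _ ≤ (|ω il| + |ω i0|) * M := by nlinarith [abs_nonneg (ω il)]
      have h4 : clow ≤ m / (2 * EM) := min_le_right _ _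
      have : clow * (Real.exp (ω il * z.re) + Real.exp (ω i0 * z.re))
          ≤ (m / (2 * EM)) * (2 * EM) := by
        apply mul_le_mul h4 (by linarith) (by positivity) (by positivity)
      rw [div_mul_cancel₀] at this
      · linarith
      · positivity
  have hSne : ∀ z, S z ≠ 0 := by
    intro z hz
    have := hlow z
    rw [hz, norm_zero] at this
    nlinarith [Real.exp_pos (ω il * z.re), Real.exp_pos (ω i0 * z.re)]
  set Cd : ℝ := ∑ j, ‖A j‖ * |ω j| with hCddef
  have hCd0 : 0 ≤ Cd := Finset.sum_nonneg fun j _ => by positivity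
  set S₁ : ℂ → ℂ := fun z => ∑ j, (A j * (ω j : ℂ)) * Complex.exp ((ω j : ℂ) * z) with hS₁def
  have hS₁bound : ∀ z : ℂ, ‖S₁ z‖ ≤ Cd * (Real.exp (ω il * z.re) + Real.exp (ω i0 * z.re)) := by
    intro z
    have hEsum : ∀ j : Fin n, Real.exp (ω j * z.re)
        ≤ Real.exp (ω il * z.re) + Real.exp (ω i0 * z.re) := by
      intro j
      rcases le_or_gt 0 z.re with hx | hx
      · have : Real.exp (ω j * z.re) ≤ Real.exp (ω il * z.re) :=
          Real.exp_le_exp.2 (mul_le_mul_of_nonneg_right (hlej j).2 hx)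
        linarith [Real.exp_pos (ω i0 * z.re)]
      · have : Real.exp (ω j * z.re) ≤ Real.exp (ω i0 * z.re) :=
          Real.exp_le_exp.2 (by nlinarith [(hlej j).1])
        linarith [Real.exp_pos (ω il * z.re)]
    calc ‖S₁ z‖ ≤ ∑ j, ‖(A j * (ω j : ℂ)) * Complex.exp ((ω j : ℂ) * z)‖ := norm_sum_le _ _
      _ ≤ ∑ j, (‖A j‖ * |ω j|) * (Real.exp (ω il * z.re) + Real.exp (ω i0 * z.re)) := by
          refine Finset.sum_le_sum fun j _ => ?_
          rw [norm_mul, norm_mul, Complex.norm_exp,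
            Complex.norm_real, Real.norm_eq_abs]
          have hre : ((ω j : ℂ) * z).re = ω j * z.re := by simp [Complex.mul_re]
          rw [hre]
          exact mul_le_mul_of_nonneg_left (hEsum j) (by positivity)
      _ = Cd * (Real.exp (ω il * z.re) + Real.exp (ω i0 * z.re)) := by
          rw [hCddef, Finset.sum_mul]
  set F : ℂ → ℂ := fun z => S₁ z / S z with hFdef
  have hS₁diff : Differentiable ℂ S₁ := expsum_differentiable ω (fun j => A j * (ω j : ℂ))
  have hSdiff : Differentiable ℂ S := expsum_differentiable ω A
  have hF : Differentiable ℂ F := hS₁diff.div hSdiff hSne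
  have hFbdd : ∀ z, ‖F z‖ ≤ Cd / clow := by
    intro z
    rw [hFdef]
    simp only
    rw [norm_div, div_le_div_iff₀ (norm_pos_iff.2 (hSne z)) hclow]
    have h1 := hS₁bound z
    have h2 := hlow z
    have hE : 0 < Real.exp (ω il * z.re) + Real.exp (ω i0 * z.re) := by positivity
    nlinarith [norm_nonneg (S₁ z)]
  have hrange : IsBounded (Set.range F) := isBounded_iff_forall_norm_le.2
    ⟨Cd / clow, by rintro x ⟨z, rfl⟩; exact hFbdd z⟩
  have hconst : ∀ z : ℂ, F z = F 0 := fun z => hF.apply_eq_apply_of_bounded hrange z 0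
  set c : ℂ := F 0 with hcdef
  have hS₁c : ∀ z, S₁ z = c * S z := by
    intro z
    have h := hconst z
    rw [hFdef] at h
    simp only at h
    rw [div_eq_iff (hSne z)] at h
    exact h
  have hzero : ∀ z : ℂ, ∑ j, (A j * ((ω j : ℂ) - c)) * Complex.exp ((ω j : ℂ) * z) = 0 := by
    intro z
    have h := hS₁c z
    have hexp : ∑ j, (A j * ((ω j : ℂ) - c)) * Complex.exp ((ω j : ℂ) * z)
        = S₁ z - c * S z := by
      rw [hS₁def, hSdef]
      simp only
      rw [Finset.mul_sum, ← Finset.sum_sub_distrib]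
      refine Finset.sum_congr rfl fun j _ => ?_
      ring
    rw [hexp, h, sub_self]
  have hBzero := expsum_eq_zero ω hω.injective _ hzero
  have e0 : (ω i0 : ℂ) = c := by
    have := hBzero i0
    rcases mul_eq_zero.1 this with h | h
    · exact absurd h (hA i0)
    · linear_combination h
  have el : (ω il : ℂ) = c := by
    have := hBzero il
    rcases mul_eq_zero.1 this with h | h
    · exact absurd h (hA il)
    · linear_combination h
  have : ω i0 = ω il := by
    have := e0.trans el.symm
    exact_mod_cast this
  exact absurd this (ne_of_lt (hω h0l))

/-- An exponential sum `g z = ∑ j, A j * exp (ω j * z)` with at least two terms,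
nonzero coefficients and strictly increasing real exponents has infinitely many
zeros. -/
theorem exp_sum_infinitely_many_zeros
    (n : ℕ) (hn : 2 ≤ n)
    (ω : Fin n → ℝ) (hω : StrictMono ω)
    (A : Fin n → ℂ) (hA : ∀ j, A j ≠ 0)
    (g : ℂ → ℂ)
    (hg : ∀ z : ℂ, g z = ∑ j : Fin n, A j * Complex.exp ((ω j : ℂ) * z)) :
    {z : ℂ | g z = 0}.Infinite := by
  have hgf : g = fun z => ∑ j : Fin n, A j * Complex.exp ((ω j : ℂ) * z) := funext hg
  subst hgf
  set S : ℂ → ℂ := fun z => ∑ j, A j * Complex.exp ((ω j : ℂ) * z) with hSdef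
  have hSdiff : Differentiable ℂ S := expsum_differentiable ω A
  by_contra hinf
  rw [Set.not_infinite] at hinf
  obtain ⟨Y₀, hY₀⟩ := (hinf.image Complex.im).bddAbove
  -- Part 1 : find a zero z₀ of S
  obtain ⟨z₀, hSz₀⟩ : ∃ z₀ : ℂ, S z₀ = 0 := by
    obtain ⟨M, hM, hsmall⟩ := expsum_small_values hn ω hω A hA
    choose zs hzs1 hzs2 using fun k : ℕ => hsmall (1 / ((k : ℝ) + 1)) (by positivity)
    set p : ℕ → ℝ × (Fin n → ℂ) := fun k =>
      ((zs k).re, fun j => Complex.exp (((ω j * (zs k).im : ℝ) : ℂ) * Complex.I)) with hpdef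
    have hK : IsCompact ((Set.Icc (-M) M) ×ˢ (closedBall (0 : Fin n → ℂ) 1)) :=
      isCompact_Icc.prod (isCompact_closedBall _ _)
    have hpK : ∀ k, p k ∈ (Set.Icc (-M) M) ×ˢ (closedBall (0 : Fin n → ℂ) 1) := by
      intro k
      refine Set.mem_prod.2 ⟨?_, ?_⟩
      · rw [Set.mem_Icc]
        exact abs_le.1 (hzs1 k)
      · rw [mem_closedBall_zero_iff]
        refine (pi_norm_le_iff_of_nonneg zero_le_one).2 fun j => ?_
        rw [hpdef]
        simp only
        rw [Complex.norm_exp_ofReal_mul_I]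
    obtain ⟨⟨x₀, u⟩, -, φ, hφmono, hφtend⟩ := hK.tendsto_subseq hpK
    set Φ : ℝ × (Fin n → ℂ) → ℂ :=
      fun q => ∑ j, (A j * q.2 j) * Complex.exp ((ω j : ℂ) * (q.1 : ℂ)) with hΦdef
    have hΦcont : Continuous Φ := by
      refine continuous_finset_sum _ fun j _ => Continuous.mul ?_ ?_
      · exact continuous_const.mul ((continuous_apply j).comp continuous_snd)
      · exact Continuous.cexp (continuous_const.mul
          (Complex.continuous_ofReal.comp continuous_fst))
    have hΦp : ∀ k, Φ (p k) = S (zs k) := by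
      intro k
      rw [hΦdef, hSdef, hpdef]
      simp only
      refine Finset.sum_congr rfl fun j _ => ?_
      rw [mul_assoc, ← Complex.exp_add]
      congr 2
      conv_rhs => rw [← Complex.re_add_im (zs k)]
      push_cast
      ring
    have h1 : Tendsto (fun k => Φ (p (φ k))) atTop (𝓝 (Φ (x₀, u))) :=
      (hΦcont.tendsto (x₀, u)).comp hφtend
    have h2 : Tendsto (fun k => Φ (p (φ k))) atTop (𝓝 0) := by
      refine squeeze_zero_norm (fun k => ?_) tendsto_one_div_add_atTop_nhds_zero_nat
      rw [hΦp (φ k)]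
      refine le_trans (hzs2 (φ k)).le ?_
      apply one_div_le_one_div_of_le (by positivity)
      have hk : k ≤ φ k := hφmono.le_apply
      have : (k : ℝ) ≤ (φ k : ℝ) := by exact_mod_cast hk
      linarith
    have hΦ0 : Φ (x₀, u) = 0 := tendsto_nhds_unique h1 h2
    set G : ℂ → ℂ := fun z => ∑ j, (A j * u j) * Complex.exp ((ω j : ℂ) * z) with hGdef
    have hG0 : G (x₀ : ℂ) = 0 := hΦ0
    have huj : ∀ j, u j ≠ 0 := by
      intro j
      have h3 : Tendsto (fun k => (p (φ k)).2 j) atTop (𝓝 (u j)) :=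
        ((((continuous_apply j).comp continuous_snd).tendsto (x₀, u)).comp hφtend)
      have h4 : Tendsto (fun k => ‖(p (φ k)).2 j‖) atTop (𝓝 ‖u j‖) := h3.norm
      have h5 : (fun k => ‖(p (φ k)).2 j‖) = fun _ => (1 : ℝ) := by
        funext k
        rw [hpdef]
        simp only
        rw [Complex.norm_exp_ofReal_mul_I]
      rw [h5] at h4
      have h6 : ‖u j‖ = 1 := tendsto_nhds_unique h4 tendsto_const_nhds
      intro h
      rw [h, norm_zero] at h6
      linarith
    have hGne : ¬ ∀ z, G z = 0 := by
      intro hall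
      have := expsum_eq_zero ω hω.injective _ hall ⟨0, by omega⟩
      exact (mul_ne_zero (hA _) (huj _)) this
    have hGdiff : Differentiable ℂ G := expsum_differentiable ω (fun j => A j * u j)
    obtain ⟨r, mG, hr, hr1, hmG, hsphG⟩ := exists_good_radius hGdiff (x₀ : ℂ) hGne
    set C₄ : ℝ := ∑ j, ‖A j‖ * Real.exp (|ω j| * (|x₀| + 1)) with hC₄def
    have hC₄0 : 0 ≤ C₄ := Finset.sum_nonneg fun j _ => by positivity
    have hδpos : 0 < mG / (3 * (C₄ + 1)) := by positivity
    rw [Metric.tendsto_atTop] at hφtend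
    obtain ⟨N, hN⟩ := hφtend _ hδpos
    have hdsnd : dist ((p (φ N)).2) u ≤ mG / (3 * (C₄ + 1)) := by
      have := hN N le_rfl
      refine le_trans ?_ this.le
      have := Prod.dist_eq (x := (p (φ N))) (y := (x₀, u))
      rw [Function.comp_apply]
      rw [this]
      exact le_max_right _ _
    set v : ℝ := (zs (φ N)).im with hvdef
    set f : ℂ → ℂ := fun z => S (z + (v : ℂ) * Complex.I) with hfdef
    have hfdiff : Differentiable ℂ f := hSdiff.comp (differentiable_id.add_const _)
    have hclose : ∀ z ∈ closedBall (x₀ : ℂ) r, ‖f z - G z‖ ≤ mG / 3 := by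
      intro z hz
      have hzre : |z.re| ≤ |x₀| + 1 := by
        have hd : dist z (x₀ : ℂ) ≤ r := mem_closedBall.1 hz
        have h7 : |(z - (x₀ : ℂ)).re| ≤ ‖z - (x₀ : ℂ)‖ := Complex.abs_re_le_norm _
        rw [Complex.sub_re, Complex.ofReal_re] at h7
        rw [Complex.dist_eq] at hd
        have h8 : |z.re| - |x₀| ≤ |z.re - x₀| := by
          have := abs_sub_abs_le_abs_sub z.re x₀
          linarith
        linarith
      have hterm : ∀ j : Fin n,
          ‖A j * Complex.exp ((ω j : ℂ) * (z + (v : ℂ) * Complex.I))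
            - (A j * u j) * Complex.exp ((ω j : ℂ) * z)‖
          ≤ (‖A j‖ * Real.exp (|ω j| * (|x₀| + 1))) * (mG / (3 * (C₄ + 1))) := by
        intro j
        have hsplit : A j * Complex.exp ((ω j : ℂ) * (z + (v : ℂ) * Complex.I))
            - (A j * u j) * Complex.exp ((ω j : ℂ) * z)
            = (A j * ((p (φ N)).2 j - u j)) * Complex.exp ((ω j : ℂ) * z) := by
          have hkey : Complex.exp ((ω j : ℂ) * (z + (v : ℂ) * Complex.I))
              = (p (φ N)).2 j * Complex.exp ((ω j : ℂ) * z) := by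
            rw [hpdef]
            simp only
            rw [← Complex.exp_add]
            congr 1
            push_cast
            ring
          rw [hkey]
          ring
        rw [hsplit, norm_mul, norm_mul]
        have hexpz : ‖Complex.exp ((ω j : ℂ) * z)‖ ≤ Real.exp (|ω j| * (|x₀| + 1)) := by
          rw [Complex.norm_exp]
          apply Real.exp_le_exp.2
          have hre : ((ω j : ℂ) * z).re = ω j * z.re := by simp [Complex.mul_re]
          rw [hre]
          calc ω j * z.re ≤ |ω j * z.re| := le_abs_self _
            _ = |ω j| * |z.re| := abs_mul _ _
            _ ≤ |ω j| * (|x₀| + 1) := mul_le_mul_of_nonneg_left hzre (abs_nonneg _)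
        have hdiffj : ‖(p (φ N)).2 j - u j‖ ≤ mG / (3 * (C₄ + 1)) := by
          refine le_trans ?_ hdsnd
          rw [← dist_eq_norm]
          exact dist_le_pi_dist _ _ j
        calc ‖A j‖ * ‖(p (φ N)).2 j - u j‖ * ‖Complex.exp ((ω j : ℂ) * z)‖
            ≤ ‖A j‖ * (mG / (3 * (C₄ + 1))) * Real.exp (|ω j| * (|x₀| + 1)) := by
              apply mul_le_mul
              · exact mul_le_mul_of_nonneg_left hdiffj (norm_nonneg _)
              · exact hexpz
              · exact norm_nonneg _
              · positivity
          _ = (‖A j‖ * Real.exp (|ω j| * (|x₀| + 1))) * (mG / (3 * (C₄ + 1))) := by ring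
      have hsum : ‖f z - G z‖
          ≤ C₄ * (mG / (3 * (C₄ + 1))) := by
        rw [hfdef, hGdef, hSdef]
        simp only
        rw [← Finset.sum_sub_distrib]
        refine le_trans (norm_sum_le _ _) ?_
        rw [hC₄def, Finset.sum_mul]
        exact Finset.sum_le_sum fun j _ => hterm j
      refine le_trans hsum ?_
      have h9 : C₄ * (mG / (3 * (C₄ + 1))) = mG * (C₄ / (C₄ + 1)) / 3 := by
        field_simp
      have h10 : C₄ / (C₄ + 1) ≤ 1 := by
        rw [div_le_one (by positivity)]
        linarith
      have h11 : mG * (C₄ / (C₄ + 1)) ≤ mG * 1 := by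
        apply mul_le_mul_of_nonneg_left h10 hmG.le
      rw [h9]
      linarith
    obtain ⟨w, hw, hfw⟩ := exists_zero_of_close hfdiff hr hmG hG0 hsphG hclose
    exact ⟨w + (v : ℂ) * Complex.I, hfw⟩
  -- Part 2 : push the zero up
  have hSne' : ¬ ∀ z, S z = 0 := by
    intro hall
    exact hA ⟨0, by omega⟩ (expsum_eq_zero ω hω.injective A hall ⟨0, by omega⟩)
  obtain ⟨r', m', hr', hr'1, hm', hsph'⟩ := exists_good_radius hSdiff z₀ hSne'
  set C₅ : ℝ := ∑ j, ‖A j‖ * Real.exp (|ω j| * (‖z₀‖ + 1)) with hC₅def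
  have hC₅0 : 0 ≤ C₅ := Finset.sum_nonneg fun j _ => by positivity
  have hεpos : 0 < m' / (3 * (C₅ + 1)) := by positivity
  obtain ⟨y, hyY, hy⟩ := exists_almost_period ω hεpos (Y₀ - z₀.im + 2)
  set f2 : ℂ → ℂ := fun z => S (z + (y : ℂ) * Complex.I) with hf2def
  have hf2diff : Differentiable ℂ f2 := hSdiff.comp (differentiable_id.add_const _)
  have hclose2 : ∀ z ∈ closedBall z₀ r', ‖f2 z - S z‖ ≤ m' / 3 := by
    intro z hz
    have hzre : |z.re| ≤ ‖z₀‖ + 1 := by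
      have hd : dist z z₀ ≤ r' := mem_closedBall.1 hz
      have h7 : |z.re| ≤ ‖z‖ := Complex.abs_re_le_norm _
      have h8 : ‖z‖ ≤ ‖z₀‖ + ‖z - z₀‖ := by
        have := norm_add_le z₀ (z - z₀)
        simpa using this
      rw [Complex.dist_eq] at hd
      linarith
    have hterm : ∀ j : Fin n,
        ‖A j * Complex.exp ((ω j : ℂ) * (z + (y : ℂ) * Complex.I))
          - A j * Complex.exp ((ω j : ℂ) * z)‖
        ≤ (‖A j‖ * Real.exp (|ω j| * (‖z₀‖ + 1))) * (m' / (3 * (C₅ + 1))) := by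
      intro j
      have hsplit : A j * Complex.exp ((ω j : ℂ) * (z + (y : ℂ) * Complex.I))
          - A j * Complex.exp ((ω j : ℂ) * z)
          = (A j * Complex.exp ((ω j : ℂ) * z))
            * (Complex.exp ((ω j : ℂ) * (y : ℂ) * Complex.I) - 1) := by
        have hkey : Complex.exp ((ω j : ℂ) * (z + (y : ℂ) * Complex.I))
            = Complex.exp ((ω j : ℂ) * (y : ℂ) * Complex.I)
              * Complex.exp ((ω j : ℂ) * z) := by
          rw [← Complex.exp_add]
          congr 1
          ring
        rw [hkey]
        ring
      rw [hsplit, norm_mul, norm_mul]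
      have hexpz : ‖Complex.exp ((ω j : ℂ) * z)‖ ≤ Real.exp (|ω j| * (‖z₀‖ + 1)) := by
        rw [Complex.norm_exp]
        apply Real.exp_le_exp.2
        have hre : ((ω j : ℂ) * z).re = ω j * z.re := by simp [Complex.mul_re]
        rw [hre]
        calc ω j * z.re ≤ |ω j * z.re| := le_abs_self _
          _ = |ω j| * |z.re| := abs_mul _ _
          _ ≤ |ω j| * (‖z₀‖ + 1) := mul_le_mul_of_nonneg_left hzre (abs_nonneg _)
      calc ‖A j‖ * ‖Complex.exp ((ω j : ℂ) * z)‖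
            * ‖Complex.exp ((ω j : ℂ) * (y : ℂ) * Complex.I) - 1‖
          ≤ ‖A j‖ * Real.exp (|ω j| * (‖z₀‖ + 1)) * (m' / (3 * (C₅ + 1))) := by
            apply mul_le_mul
            · exact mul_le_mul_of_nonneg_left hexpz (norm_nonneg _)
            · exact hy j
            · exact norm_nonneg _
            · positivity
        _ = (‖A j‖ * Real.exp (|ω j| * (‖z₀‖ + 1))) * (m' / (3 * (C₅ + 1))) := by ring
    have hsum : ‖f2 z - S z‖ ≤ C₅ * (m' / (3 * (C₅ + 1))) := by
      rw [hf2def, hSdef]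
      simp only
      rw [← Finset.sum_sub_distrib]
      refine le_trans (norm_sum_le _ _) ?_
      rw [hC₅def, Finset.sum_mul]
      exact Finset.sum_le_sum fun j _ => hterm j
    refine le_trans hsum ?_
    have h9 : C₅ * (m' / (3 * (C₅ + 1))) = m' * (C₅ / (C₅ + 1)) / 3 := by
      field_simp
    have h10 : C₅ / (C₅ + 1) ≤ 1 := by
      rw [div_le_one (by positivity)]
      linarith
    have h11 : m' * (C₅ / (C₅ + 1)) ≤ m' * 1 := by
      apply mul_le_mul_of_nonneg_left h10 hm'.le
    rw [h9]
    linarith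
  obtain ⟨w2, hw2, hf2w⟩ := exists_zero_of_close hf2diff hr' hm' hSz₀ hsph' hclose2
  have hmem : (w2 + (y : ℂ) * Complex.I) ∈ {z : ℂ | S z = 0} := hf2w
  have him : (w2 + (y : ℂ) * Complex.I).im ≤ Y₀ :=
    hY₀ ⟨_, hmem, rfl⟩
  have himcalc : (w2 + (y : ℂ) * Complex.I).im = w2.im + y := by
    simp
  have hw2im : z₀.im - r' ≤ w2.im := by
    have hd : dist w2 z₀ ≤ r' := mem_closedBall.1 hw2
    have h7 : |(w2 - z₀).im| ≤ ‖w2 - z₀‖ := Complex.abs_im_le_norm _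
    rw [Complex.sub_im] at h7
    rw [Complex.dist_eq] at hd
    have := abs_le.1 (le_trans h7 hd)
    linarith [this.1]
  rw [himcalc] at him
  linarith
end

section
/- Let a > 0 and let φ, μ be real numbers with φ > μ, and define A(k) = a·exp(i·k·φ) − exp(i·k·μ) for k ∈ ℂ. Then for every α ∈ ℝ and every s > 0, the number N of zeros of A with α ≤ Re k ≤ α + s satisfies |N − s·(φ − μ)/(2π)| ≤ 1. -/
open Complex

/-- Strip zero-count for `A k = a exp(i k φ) - exp(i k μ)` (with `a > 0`, `φ > μ` real):
for every `α ∈ ℝ` and `s > 0`, the number `N` of zeros of `A` with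
`α ≤ Re k ≤ α + s` satisfies `|N - s (φ - μ) / (2π)| ≤ 1`. -/
theorem leading_term_strip_zero_count
    (a φ μ : ℝ) (ha : 0 < a) (hφμ : μ < φ)
    (A : ℂ → ℂ)
    (hA : ∀ k : ℂ, A k = (a : ℂ) * Complex.exp (Complex.I * k * (φ : ℂ)) -
        Complex.exp (Complex.I * k * (μ : ℂ))) :
    ∀ α : ℝ, ∀ s : ℝ, 0 < s →
      ∃ Z : Finset ℂ,
        (∀ k : ℂ, k ∈ Z ↔ A k = 0 ∧ α ≤ k.re ∧ k.re ≤ α + s) ∧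
        |(Z.card : ℝ) - s * (φ - μ) / (2 * Real.pi)| ≤ 1 := by
  intro α s hs
  set c : ℝ := φ - μ with hcdef
  have hc0 : 0 < c := by rw [hcdef]; linarith
  set r : ℝ := Real.log a with hrdef
  have hπ : 0 < Real.pi := Real.pi_pos
  have h2π : 0 < 2 * Real.pi := by linarith
  set f : ℤ → ℂ := fun n => ((2 * Real.pi * n / c : ℝ) : ℂ) + ((r / c : ℝ) : ℂ) * Complex.I with hf
  have hcC : (c : ℂ) ≠ 0 := by exact_mod_cast hc0.ne'
  have hre : ∀ n : ℤ, (f n).re = 2 * Real.pi * n / c := by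
    intro n; simp [hf]
  have h2 : ∀ n : ℤ, Complex.I * (f n) * (c : ℂ) = (n : ℂ) * (2 * (Real.pi : ℂ) * Complex.I) - (r : ℂ) := by
    intro n
    simp only [hf]
    have hI := Complex.I_sq
    field_simp
    ring_nf
    rw [Complex.I_sq]
    push_cast
    have hc1 : (c : ℂ) * (c : ℂ)⁻¹ = 1 := mul_inv_cancel₀ hcC
    linear_combination (Complex.I * (Real.pi : ℂ) * (n : ℂ) * 2 - (r : ℂ)) * hc1
  have hzero : ∀ k : ℂ, A k = 0 ↔ ∃ n : ℤ, k = f n := by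
    intro k
    rw [hA k]
    have ha' : (a : ℂ) = Complex.exp ((r : ℝ) : ℂ) := by
      rw [hrdef, ← Complex.ofReal_exp, Real.exp_log ha]
    rw [sub_eq_zero, ha', ← Complex.exp_add, Complex.exp_eq_exp_iff_exists_int]
    constructor
    · rintro ⟨n, hn⟩
      refine ⟨n, ?_⟩
      have hkey : Complex.I * k * (c : ℂ) = Complex.I * (f n) * (c : ℂ) := by
        rw [h2 n]
        have : (c : ℂ) = (φ : ℂ) - (μ : ℂ) := by push_cast [hcdef]; ring
        rw [this]
        linear_combination hn
      have h3 : Complex.I * (k * (c : ℂ)) = Complex.I * (f n * (c : ℂ)) := by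
        linear_combination hkey
      have h4 := mul_left_cancel₀ Complex.I_ne_zero h3
      exact mul_right_cancel₀ hcC h4
    · rintro ⟨n, hn⟩
      refine ⟨n, ?_⟩
      have := h2 n
      rw [hn]
      have hcc : (c : ℂ) = (φ : ℂ) - (μ : ℂ) := by push_cast [hcdef]; ring
      rw [hcc] at this
      linear_combination this
  -- injectivity
  have hinj : Function.Injective f := by
    intro m n hmn
    have := congrArg Complex.re hmn
    rw [hre, hre] at this
    field_simp at this
    exact_mod_cast this
  set u : ℝ := α * c / (2 * Real.pi) with hu
  set v : ℝ := (α + s) * c / (2 * Real.pi) with hv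
  refine ⟨(Finset.Icc ⌈u⌉ ⌊v⌋).image f, ?_, ?_⟩
  · intro k
    simp only [Finset.mem_image, Finset.mem_Icc]
    constructor
    · rintro ⟨n, ⟨hn1, hn2⟩, rfl⟩
      refine ⟨(hzero _).2 ⟨n, rfl⟩, ?_, ?_⟩
      · rw [hre]
        rw [Int.ceil_le] at hn1
        rw [hu] at hn1
        rw [div_le_iff₀ h2π] at hn1
        rw [le_div_iff₀ hc0]
        linarith
      · rw [hre]
        rw [Int.le_floor] at hn2
        rw [hv] at hn2
        rw [le_div_iff₀ h2π] at hn2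
        rw [div_le_iff₀ hc0]
        linarith
    · rintro ⟨hk, hk1, hk2⟩
      obtain ⟨n, rfl⟩ := (hzero _).1 hk
      rw [hre] at hk1 hk2
      refine ⟨n, ⟨?_, ?_⟩, rfl⟩
      · rw [Int.ceil_le, hu, div_le_iff₀ h2π]
        rw [le_div_iff₀ hc0] at hk1
        linarith
      · rw [Int.le_floor, hv, le_div_iff₀ h2π]
        rw [div_le_iff₀ hc0] at hk2
        linarith
  · rw [Finset.card_image_of_injective _ hinj, Int.card_Icc]
    set m := ⌈u⌉ with hm
    set M := ⌊v⌋ with hM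
    have h1 : u ≤ (m : ℝ) := Int.le_ceil u
    have h1' : (m : ℝ) < u + 1 := Int.ceil_lt_add_one u
    have h3 : (M : ℝ) ≤ v := Int.floor_le v
    have h3' : v - 1 < (M : ℝ) := Int.sub_one_lt_floor v
    have hL : v - u = s * c / (2 * Real.pi) := by
      rw [hu, hv]; field_simp; ring
    have hnn : 0 ≤ M + 1 - m := by
      have : (-1 : ℝ) < (M : ℝ) + 1 - m := by
        have huv : u ≤ v := by
          rw [hu, hv]
          apply div_le_div_of_nonneg_right ?_ h2π.le
          nlinarith
        nlinarith
      have : (-1 : ℤ) < M + 1 - m := by exact_mod_cast this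
      omega
    have hcast : ((M + 1 - m).toNat : ℝ) = (M : ℝ) + 1 - m := by
      have h6 := Int.toNat_of_nonneg hnn
      exact_mod_cast h6
    rw [hcast, abs_le]
    constructor <;> nlinarith
end

section
/- Let a₁, a₂ > 0 and let φ₁, φ₂, μ be real numbers with φ₁ > μ and φ₂ > μ. Define A₁(k) = a₁·exp(i·k·φ₁) − exp(i·k·μ) and A₂(k) = a₂·exp(i·k·φ₂) − exp(i·k·μ). If A₁ and A₂ have the same zero set, i.e., {k ∈ ℂ : A₁(k) = 0} = {k ∈ ℂ : A₂(k) = 0}, then a₁ = a₂ and φ₁ = φ₂. -/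
open Complex

lemma amp_one (a : ℝ) (ha : 0 < a) : (a:ℂ) * Complex.exp (-(Real.log a : ℂ)) = 1 := by
  have : a * Real.exp (-(Real.log a)) = 1 := by
    rw [Real.exp_neg, Real.exp_log ha]; field_simp
  calc (a:ℂ) * Complex.exp (-(Real.log a : ℂ))
      = ((a * Real.exp (-(Real.log a)) : ℝ) : ℂ) := by
        push_cast [Complex.ofReal_exp]; ring_nf
    _ = 1 := by rw [this]; norm_num

lemma zero_eval (a d : ℝ) (ha : 0 < a) (hd : 0 < d) (t : ℝ) :
    (a:ℂ) * Complex.exp (Complex.I * (((t:ℂ) + Real.log a * Complex.I)/d) * d) =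
      Complex.exp ((t:ℂ) * Complex.I) := by
  have hdne : (d:ℂ) ≠ 0 := by exact_mod_cast hd.ne'
  have harg : Complex.I * (((t:ℂ) + Real.log a * Complex.I)/d) * d
      = (t:ℂ) * Complex.I + (-(Real.log a : ℂ)) := by
    field_simp
    ring_nf
    rw [Complex.I_sq]
    ring
  rw [harg, Complex.exp_add]
  rw [show (a:ℂ) * (Complex.exp ((t:ℂ)*Complex.I) * Complex.exp (-(Real.log a:ℂ)))
      = Complex.exp ((t:ℂ)*Complex.I) * ((a:ℂ) * Complex.exp (-(Real.log a:ℂ))) by ring,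
    amp_one a ha, mul_one]

lemma aux_zero (a₁ a₂ d₁ d₂ : ℝ) (ha₁ : 0 < a₁) (ha₂ : 0 < a₂) (hd₁ : 0 < d₁) (hd₂ : 0 < d₂)
    (hiff : ∀ k : ℂ, (a₁:ℂ) * Complex.exp (Complex.I*k*(d₁:ℂ)) = 1 ↔
      (a₂:ℂ) * Complex.exp (Complex.I*k*(d₂:ℂ)) = 1) :
    (∃ n : ℤ, d₂/d₁ = n) ∧ a₂ * Real.exp (-(Real.log a₁ * (d₂/d₁))) = 1 := by
  have hd₁ne : (d₁:ℂ) ≠ 0 := by exact_mod_cast hd₁.ne'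
  -- zero at t = 0
  have h0 : (a₂:ℂ) * Complex.exp (Complex.I * (((0:ℝ) + Real.log a₁ * Complex.I)/(d₁:ℂ)) * d₂) = 1 := by
    rw [← hiff]
    rw [zero_eval a₁ d₁ ha₁ hd₁ 0]
    norm_num
  have harg0 : Complex.I * (((0:ℝ) + Real.log a₁ * Complex.I)/(d₁:ℂ)) * d₂
      = (-(Real.log a₁ * (d₂/d₁)) : ℝ) := by
    push_cast
    field_simp
    ring_nf
    rw [Complex.I_sq]
    ring
  rw [harg0] at h0
  have hra : a₂ * Real.exp (-(Real.log a₁ * (d₂/d₁))) = 1 := by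
    have := h0
    rw [← Complex.ofReal_exp] at this
    exact_mod_cast this
  refine ⟨?_, hra⟩
  -- zero at t = 2π
  have h1 : (a₂:ℂ) * Complex.exp (Complex.I * ((((2*Real.pi:ℝ):ℂ) + Real.log a₁ * Complex.I)/(d₁:ℂ)) * d₂) = 1 := by
    rw [← hiff, zero_eval a₁ d₁ ha₁ hd₁ (2*Real.pi)]
    push_cast
    rw [show (2:ℂ)*Real.pi*Complex.I = 2*Real.pi*Complex.I by ring]
    exact Complex.exp_two_pi_mul_I
  have harg1 : Complex.I * ((((2*Real.pi:ℝ):ℂ) + Real.log a₁ * Complex.I)/(d₁:ℂ)) * d₂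
      = ((-(Real.log a₁ * (d₂/d₁)) : ℝ) : ℂ) + ((2*Real.pi*(d₂/d₁) : ℝ):ℂ) * Complex.I := by
    push_cast
    field_simp
    ring_nf
    rw [Complex.I_sq]
    ring
  rw [harg1, Complex.exp_add] at h1
  have h2 : Complex.exp (((2*Real.pi*(d₂/d₁) : ℝ):ℂ) * Complex.I) = 1 := by
    have hne : ((a₂:ℂ) * Complex.exp ((-(Real.log a₁ * (d₂/d₁)) : ℝ) : ℂ)) = 1 := by
      rw [← Complex.ofReal_exp]
      exact_mod_cast hra
    have := h1
    rw [show (a₂:ℂ) * (Complex.exp ((-(Real.log a₁ * (d₂/d₁)) : ℝ):ℂ) * Complex.exp (((2*Real.pi*(d₂/d₁) : ℝ):ℂ) * Complex.I))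
        = ((a₂:ℂ) * Complex.exp ((-(Real.log a₁ * (d₂/d₁)) : ℝ):ℂ)) * Complex.exp (((2*Real.pi*(d₂/d₁) : ℝ):ℂ) * Complex.I) by ring,
      hne, one_mul] at this
    exact this
  rw [Complex.exp_eq_one_iff] at h2
  obtain ⟨n, hn⟩ := h2
  refine ⟨n, ?_⟩
  have hπ : (Real.pi : ℂ) ≠ 0 := by exact_mod_cast Real.pi_ne_zero
  have hc : ((2*Real.pi*(d₂/d₁) : ℝ):ℂ) = (n:ℂ) * (2*Real.pi) :=
    mul_right_cancel₀ Complex.I_ne_zero (by linear_combination hn)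
  have hr : (2*Real.pi*(d₂/d₁) : ℝ) = (n:ℝ) * (2*Real.pi) := by exact_mod_cast hc
  have h2π : (2*Real.pi : ℝ) ≠ 0 := by positivity
  have := mul_left_cancel₀ h2π (show (2*Real.pi) * (d₂/d₁) = (2*Real.pi) * (n:ℝ) by linarith)
  exact this

/-- The zero set of the leading term `Aⱼ k = aⱼ exp(i k φⱼ) - exp(i k μ)` determines
both the geometric-optics amplitude `aⱼ` and the travel time `φⱼ`: if the two zero
sets coincide then `a₁ = a₂` and `φ₁ = φ₂`. -/
theorem leading_term_determined_by_zero_set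
    (a₁ a₂ φ₁ φ₂ μ : ℝ) (ha₁ : 0 < a₁) (ha₂ : 0 < a₂)
    (hφ₁ : μ < φ₁) (hφ₂ : μ < φ₂)
    (A₁ A₂ : ℂ → ℂ)
    (hA₁ : ∀ k : ℂ, A₁ k = (a₁ : ℂ) * Complex.exp (Complex.I * k * (φ₁ : ℂ)) -
        Complex.exp (Complex.I * k * (μ : ℂ)))
    (hA₂ : ∀ k : ℂ, A₂ k = (a₂ : ℂ) * Complex.exp (Complex.I * k * (φ₂ : ℂ)) -
        Complex.exp (Complex.I * k * (μ : ℂ)))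
    (hzero : {k : ℂ | A₁ k = 0} = {k : ℂ | A₂ k = 0}) :
    a₁ = a₂ ∧ φ₁ = φ₂ := by
  have hd₁ : (0:ℝ) < φ₁ - μ := by linarith
  have hd₂ : (0:ℝ) < φ₂ - μ := by linarith
  have key : ∀ (a φ : ℝ) (k : ℂ),
      ((a:ℂ) * Complex.exp (Complex.I * k * (φ:ℂ)) - Complex.exp (Complex.I * k * (μ:ℂ)) = 0)
        ↔ (a:ℂ) * Complex.exp (Complex.I * k * ((φ - μ : ℝ):ℂ)) = 1 := by
    intro a φ k
    have hne := Complex.exp_ne_zero (Complex.I * k * (μ:ℂ))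
    rw [sub_eq_zero]
    have e : (a:ℂ) * Complex.exp (Complex.I * k * (φ:ℂ))
        = (a:ℂ) * Complex.exp (Complex.I * k * ((φ - μ : ℝ):ℂ)) * Complex.exp (Complex.I * k * (μ:ℂ)) := by
      have e2 : Complex.exp (Complex.I * k * ((φ - μ : ℝ):ℂ)) * Complex.exp (Complex.I * k * (μ:ℂ))
          = Complex.exp (Complex.I * k * (φ:ℂ)) := by
        rw [← Complex.exp_add]; congr 1; push_cast; ring
      rw [mul_assoc ((a:ℂ)), e2]
    rw [e]
    constructor
    · intro h
      exact mul_right_cancel₀ hne (by rw [h, one_mul])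
    · intro h
      rw [h, one_mul]
  have hiff : ∀ k : ℂ, (a₁:ℂ) * Complex.exp (Complex.I*k*((φ₁-μ:ℝ):ℂ)) = 1 ↔
      (a₂:ℂ) * Complex.exp (Complex.I*k*((φ₂-μ:ℝ):ℂ)) = 1 := by
    intro k
    have h := Set.ext_iff.mp hzero k
    simp only [Set.mem_setOf_eq, hA₁, hA₂] at h
    rw [key a₁ φ₁ k, key a₂ φ₂ k] at h
    exact h
  obtain ⟨⟨n, hn⟩, hra⟩ := aux_zero a₁ a₂ (φ₁-μ) (φ₂-μ) ha₁ ha₂ hd₁ hd₂ hiff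
  obtain ⟨⟨m, hm⟩, _⟩ := aux_zero a₂ a₁ (φ₂-μ) (φ₁-μ) ha₂ ha₁ hd₂ hd₁ (fun k => (hiff k).symm)
  have hq : (0:ℝ) < (φ₂-μ)/(φ₁-μ) := by positivity
  have hq' : (0:ℝ) < (φ₁-μ)/(φ₂-μ) := by positivity
  have hprod : ((φ₂-μ)/(φ₁-μ)) * ((φ₁-μ)/(φ₂-μ)) = 1 := by field_simp
  have hn1 : (1:ℤ) ≤ n := by
    have : (0:ℝ) < (n:ℝ) := hn ▸ hq
    exact_mod_cast this
  have hm1 : (1:ℤ) ≤ m := by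
    have : (0:ℝ) < (m:ℝ) := hm ▸ hq'
    exact_mod_cast this
  have hnm : n * m = 1 := by
    have : ((n:ℝ)) * (m:ℝ) = 1 := by rw [← hn, ← hm]; exact hprod
    exact_mod_cast this
  have hneq : n = 1 := by nlinarith
  have hφ : φ₁ = φ₂ := by
    have : (φ₂-μ)/(φ₁-μ) = 1 := by rw [hn, hneq]; norm_num
    have := (div_eq_one_iff_eq hd₁.ne').mp this
    linarith
  refine ⟨?_, hφ⟩
  have : (φ₂-μ)/(φ₁-μ) = 1 := by rw [hφ]; field_simp
  rw [this, mul_one, Real.exp_neg, Real.exp_log ha₁] at hra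
  field_simp at hra
  linarith
end
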